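/- Every countable simple graph G into which the random graph Γ symmetrically embeds is symmetrically indivisible. -/

import Mathlib

def IsSymmetricGraphEmb {α β : Type*} {G : SimpleGraph α} {H : SimpleGraph β}
    (e : G ↪g H) : Prop :=
  ∀ g : G ≃g G, ∃ g' : H ≃g H, ∀ x, g' (e x) = e (g x)

def SymIndivGraph {α : Type*} (G : SimpleGraph α) : Prop :=
  ∀ c : α → Bool, ∃ e : G ↪g G, IsSymmetricGraphEmb e ∧ ∀ x y, c (e x) = c (e y)

/-- The extension property characterizing the random graph. -/
def HasExtProp {α : Type*} (G : SimpleGraph α) : Prop :=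
  ∀ A B : Finset α, Disjoint A B →
    ∃ v, v ∉ A ∧ v ∉ B ∧ (∀ a ∈ A, G.Adj v a) ∧ ∀ b ∈ B, ¬ G.Adj v b

open scoped Classical

open Classical in
/-- Extension property with avoidance of an extra finite set. -/
theorem extprop_fresh {α : Type*} {G : SimpleGraph α} (h : HasExtProp G) :
    ∀ (R A B : Finset α), Disjoint A B →
      ∃ v, v ∉ A ∧ v ∉ B ∧ v ∉ R ∧ (∀ a ∈ A, G.Adj v a) ∧ ∀ b ∈ B, ¬ G.Adj v b := by
  intro R
  induction R using Finset.strongInduction with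
  | _ R ih =>
    intro A B hAB
    obtain ⟨v, hvA, hvB, hadj, hnadj⟩ := h A B hAB
    by_cases hvR : v ∈ R
    · have hAB' : Disjoint (insert v A) B := by
        rw [Finset.insert_eq, Finset.disjoint_union_left]
        exact ⟨by simpa using hvB, hAB⟩
      obtain ⟨w, hwA, hwB, hwR, hadj', hnadj'⟩ := ih (R.erase v) (Finset.erase_ssubset hvR) (insert v A) B hAB'
      refine ⟨w, fun hw => hwA (Finset.mem_insert_of_mem hw), hwB, ?_, fun a ha => hadj' a (Finset.mem_insert_of_mem ha), hnadj'⟩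
      intro hwR'
      have hwv : w ≠ v := fun hwv => hwA (hwv ▸ Finset.mem_insert_self v A)
      exact hwR (Finset.mem_erase.mpr ⟨hwv, hwR'⟩)
    · exact ⟨v, hvA, hvB, hvR, hadj, hnadj⟩

/-- A color class that is generic relative to a fixed finite "environment". -/
theorem colorclass_generic {V : Type*} {Γ : SimpleGraph V} (hΓ : HasExtProp Γ) (c : V → Bool) :
    ∃ (b : Bool) (As Bs : Finset V), Disjoint As Bs ∧
      ∀ (R A B : Finset V), Disjoint A B → Disjoint (A ∪ B) (As ∪ Bs) →
        ∃ x, x ∉ A ∧ x ∉ B ∧ x ∉ As ∧ x ∉ Bs ∧ x ∉ R ∧ c x = b ∧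
          (∀ a ∈ A ∪ As, Γ.Adj x a) ∧ ∀ y ∈ B ∪ Bs, ¬ Γ.Adj x y := by
  by_cases h : ∀ (R A B : Finset V), Disjoint A B →
      ∃ x, x ∉ A ∧ x ∉ B ∧ x ∉ R ∧ c x = true ∧ (∀ a ∈ A, Γ.Adj x a) ∧ ∀ y ∈ B, ¬ Γ.Adj x y
  · refine ⟨true, ∅, ∅, Finset.disjoint_empty_left _, ?_⟩
    intro R A B hAB _
    obtain ⟨x, h1, h2, h3, h4, h5, h6⟩ := h R A B hAB
    simp only [Finset.union_empty, Finset.notMem_empty]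
    exact ⟨x, h1, h2, by simp, by simp, h3, h4, h5, h6⟩
  · push_neg at h
    obtain ⟨R₀, A₀, B₀, hA₀B₀, hfail⟩ := h
    refine ⟨false, A₀, B₀, hA₀B₀, ?_⟩
    intro R A B hAB hdisj
    have hAB₀ : Disjoint A B₀ :=
      Finset.disjoint_of_subset_left Finset.subset_union_left
        (Finset.disjoint_of_subset_right Finset.subset_union_right hdisj)
    have hBA₀ : Disjoint A₀ B :=
      (Finset.disjoint_of_subset_left Finset.subset_union_right
        (Finset.disjoint_of_subset_right Finset.subset_union_left hdisj)).symm
    have hdisj' : Disjoint (A ∪ A₀) (B ∪ B₀) := by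
      rw [Finset.disjoint_union_left, Finset.disjoint_union_right, Finset.disjoint_union_right]
      exact ⟨⟨hAB, hAB₀⟩, hBA₀, hA₀B₀⟩
    obtain ⟨x, hxA, hxB, hxR, hadj, hnadj⟩ := extprop_fresh hΓ (R ∪ R₀) (A ∪ A₀) (B ∪ B₀) hdisj'
    simp only [Finset.mem_union, not_or] at hxA hxB hxR
    have hcx : c x = false := by
      rcases Bool.eq_false_or_eq_true (c x) with h' | h'
      swap
      · exact h'
      · obtain ⟨y, hy, hady⟩ := hfail x hxA.2 hxB.2 hxR.2 h'
          (fun a ha => hadj a (Finset.mem_union_right _ ha))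
        exact absurd hady (hnadj y (Finset.mem_union_right _ hy))
    refine ⟨x, hxA.1, hxB.1, hxA.2, hxB.2, hxR.1, hcx, ?_, ?_⟩
    · intro a ha; exact hadj a (by simpa using ha)
    · intro y hy; exact hnadj y (by simpa using hy)

universe u v

inductive Tw (β : Type u) (κ : Type v) : Type (max u v)
  | base : β → Tw β κ
  | node : ℕ → List (Tw β κ) → (κ → Bool) → Tw β κ

namespace Tw

variable {β : Type u} {κ : Type v}

def ch : Tw β κ → List (Tw β κ)
  | base _ => []
  | node _ L _ => L

def pat (σ : κ → Bool) : Tw β κ → κ → Bool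
  | base _ => σ
  | node _ _ τ => τ

theorem sizeOf_pos : ∀ t : Tw β κ, 0 < sizeOf t := by
  intro t
  cases t with
  | base b => simp only [Tw.base.sizeOf_spec]; omega
  | node n L τ => simp only [Tw.node.sizeOf_spec]; omega

/-- Custom induction principle for the nested inductive `Tw`. -/
theorem ind {motive : Tw β κ → Prop} (hb : ∀ b, motive (base b))
    (hn : ∀ n L τ, (∀ t ∈ L, motive t) → motive (node n L τ)) : ∀ t, motive t := by
  have key : ∀ (N : ℕ) (t : Tw β κ), sizeOf t ≤ N → motive t := by
    intro N
    induction N with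
    | zero => intro t ht; exact absurd ht (by have := sizeOf_pos t; omega)
    | succ N ih =>
      intro t ht
      cases t with
      | base b => exact hb b
      | node n L τ =>
        refine hn n L τ (fun s hs => ih s ?_)
        have h1 : sizeOf s < sizeOf L := List.sizeOf_lt_of_mem hs
        have h2 : sizeOf (node n L τ : Tw β κ) = 1 + sizeOf n + sizeOf L + sizeOf τ :=
          Tw.node.sizeOf_spec n L τ
        omega
  exact fun t => key (sizeOf t) t le_rfl

theorem not_mem_ch : ∀ t : Tw β κ, t ∉ ch t := by
  intro t ht
  cases t with
  | base b => simp [ch] at ht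
  | node n L τ =>
    have h1 : sizeOf (node n L τ : Tw β κ) < sizeOf L := List.sizeOf_lt_of_mem ht
    have h2 : sizeOf L < sizeOf (node n L τ : Tw β κ) := by
      simp only [Tw.node.sizeOf_spec]; omega
    omega

def map (g : β → β) : Tw β κ → Tw β κ
  | base b => base (g b)
  | node n L τ => node n (L.attach.map fun x => map g x.1) τ
decreasing_by
  have h1 : sizeOf x.1 < sizeOf L := List.sizeOf_lt_of_mem x.2
  simp only [Tw.node.sizeOf_spec]
  omega

@[simp] theorem map_base (g : β → β) (b : β) : map (κ := κ) g (base b) = base (g b) := by simp [map]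

@[simp] theorem map_node (g : β → β) (n : ℕ) (L : List (Tw β κ)) (τ : κ → Bool) :
    map g (node n L τ) = node n (L.map (map g)) τ := by
  simp only [map]
  congr 1
  simp [List.attach_map_val]

theorem map_map (g g' : β → β) : ∀ t : Tw β κ, map g (map g' t) = map (g ∘ g') t := by
  refine ind (fun b => by simp [map_base, Function.comp]) ?_
  intro n L τ ih
  simp only [map_node, List.map_map]
  congr 1
  exact List.map_congr_left (fun t ht => ih t ht)

theorem map_id : ∀ t : Tw β κ, map (id : β → β) t = t := by
  refine ind (fun b => by simp only [map_base, id]) ?_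
  intro n L τ ih
  simp only [map_node]
  congr 1
  exact List.map_congr_left ih |>.trans (List.map_id L)

@[simp] theorem ch_map (g : β → β) (t : Tw β κ) : ch (map g t) = (ch t).map (map g) := by
  cases t <;> simp [ch]

@[simp] theorem pat_map (σ : κ → Bool) (g : β → β) (t : Tw β κ) : pat σ (map g t) = pat σ t := by
  cases t <;> simp [pat]

def mapEquiv (g : β ≃ β) : Tw β κ ≃ Tw β κ where
  toFun := map g
  invFun := map g.symm
  left_inv := fun t => by
    rw [map_map]
    rw [Equiv.symm_comp_self]
    exact map_id t
  right_inv := fun t => by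
    rw [map_map]
    rw [Equiv.self_comp_symm]
    exact map_id t

theorem fresh_node (D : Finset (Tw β κ)) (L0 : List (Tw β κ)) (τ : κ → Bool) :
    ∃ n : ℕ, node n L0 τ ∉ D ∧ ∀ s ∈ D, node n L0 τ ∉ ch s := by
  have hfin : (↑D ∪ ⋃ s ∈ D, {t | t ∈ ch s} : Set (Tw β κ)).Finite :=
    (D.finite_toSet).union (Set.Finite.biUnion D.finite_toSet (fun s _ => (ch s).finite_toSet))
  have hinj : Function.Injective (fun n => (node n L0 τ : Tw β κ)) := by
    intro a b h; simpa using h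
  have hpre : ((fun n => (node n L0 τ : Tw β κ)) ⁻¹' _).Finite := hfin.preimage hinj.injOn
  obtain ⟨n, hn⟩ := hpre.infinite_compl.nonempty
  simp only [Set.mem_compl_iff, Set.mem_preimage, Set.mem_union, Set.mem_iUnion,
    Finset.mem_coe, Set.mem_setOf_eq, not_or, not_exists] at hn
  exact ⟨n, hn.1, fun s hs => hn.2 s hs⟩

end Tw

namespace Tw

variable {β : Type u} {κ : Type v}

def decL : ℕ → List ℕ
  | 0 => []
  | (m + 1) => (Nat.unpair m).1 :: decL (Nat.unpair m).2
decreasing_by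
  have := Nat.unpair_right_le m
  omega

theorem decL_lt : ∀ m, ∀ a ∈ decL m, a < m := by
  intro m
  induction m using Nat.strong_induction_on with
  | _ m ih =>
    match m with
    | 0 => simp [decL]
    | (m + 1) =>
      intro a ha
      rw [decL] at ha
      rcases List.mem_cons.mp ha with h | h
      · have := Nat.unpair_left_le m; omega
      · have h2 := Nat.unpair_right_le m
        have := ih (Nat.unpair m).2 (by omega) a h
        omega

def encL : List ℕ → ℕ
  | [] => 0
  | a :: l => Nat.pair a (encL l) + 1

@[simp] theorem decL_encL : ∀ l : List ℕ, decL (encL l) = l := by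
  intro l
  induction l with
  | nil => rw [encL, decL]
  | cons a l ih => rw [encL, decL]; simp [Nat.unpair_pair, ih]

noncomputable def S (sβ : ℕ → β) (sτ : ℕ → κ → Bool) (b₀ : β) (m : ℕ) : Tw β κ :=
  if (Nat.unpair m).1 = 0 then base (sβ (Nat.unpair m).2)
  else
    node (Nat.unpair (Nat.unpair m).2).1
      ((decL (Nat.unpair (Nat.unpair (Nat.unpair m).2).2).2).map
        (fun j => if h : j < m then S sβ sτ b₀ j else base b₀))
      (sτ (Nat.unpair (Nat.unpair (Nat.unpair m).2).2).1)
termination_by m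

theorem S_surj (sβ : ℕ → β) (sτ : ℕ → κ → Bool) (b₀ : β)
    (hβ : Function.Surjective sβ) (hτ : Function.Surjective sτ) :
    Function.Surjective (S sβ sτ b₀) := by
  refine ind ?_ ?_
  · intro b
    obtain ⟨c, hc⟩ := hβ b
    refine ⟨Nat.pair 0 c, ?_⟩
    rw [S]
    simp [Nat.unpair_pair, hc]
  · intro n L τ ih
    have hms : ∃ ms : List ℕ, ms.map (S sβ sτ b₀) = L := by
      clear hτ hβ
      induction L with
      | nil => exact ⟨[], rfl⟩
      | cons a l ihl =>
        obtain ⟨m, hm⟩ := ih a (List.mem_cons_self (a := a) (l := l))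
        obtain ⟨ms, hms⟩ := ihl (fun t ht => ih t (List.mem_cons_of_mem a ht))
        exact ⟨m :: ms, by simp [hm, hms]⟩
    obtain ⟨ms, hms⟩ := hms
    obtain ⟨tc, htc⟩ := hτ τ
    refine ⟨Nat.pair 1 (Nat.pair n (Nat.pair tc (encL ms))), ?_⟩
    rw [S]
    simp only [Nat.unpair_pair, one_ne_zero, if_false, decL_encL, htc]
    congr 1
    rw [← hms]
    refine List.map_congr_left ?_
    intro j hj
    have hj1 : j < encL ms := by
      have := decL_lt (encL ms) j (by rwa [decL_encL])
      omega
    have h2 : encL ms ≤ Nat.pair tc (encL ms) := Nat.right_le_pair _ _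
    have h3 : Nat.pair tc (encL ms) ≤ Nat.pair n (Nat.pair tc (encL ms)) := Nat.right_le_pair _ _
    have h4 : Nat.pair n (Nat.pair tc (encL ms)) ≤ Nat.pair 1 (Nat.pair n (Nat.pair tc (encL ms))) :=
      Nat.right_le_pair _ _
    rw [dif_pos (by omega)]

end Tw

namespace Tw

variable {β : Type u} {κ : Type v}

def DAdj (G : SimpleGraph β) (σ : κ → Bool) (E : κ → κ → Prop) :
    (Tw β κ ⊕ κ) → (Tw β κ ⊕ κ) → Prop
  | Sum.inl x, Sum.inl y =>
      (∃ a b, x = base a ∧ y = base b ∧ G.Adj a b) ∨ x ∈ ch y ∨ y ∈ ch x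
  | Sum.inl x, Sum.inr f => pat σ x f = true
  | Sum.inr f, Sum.inl x => pat σ x f = true
  | Sum.inr f, Sum.inr f' => E f f'

def Delta (G : SimpleGraph β) (σ : κ → Bool) (E : κ → κ → Prop)
    (hsymm : ∀ f f', E f f' → E f' f) (hirr : ∀ f, ¬ E f f) :
    SimpleGraph (Tw β κ ⊕ κ) where
  Adj := DAdj G σ E
  symm := by
    constructor
    intro u v h
    cases u with
    | inl x => cases v with
      | inl y =>
        rcases h with ⟨a, b, hx, hy, hab⟩ | h | h
        · exact Or.inl ⟨b, a, hy, hx, hab.symm⟩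
        · exact Or.inr (Or.inr h)
        · exact Or.inr (Or.inl h)
      | inr f => exact h
    | inr f => cases v with
      | inl x => exact h
      | inr f' => exact hsymm _ _ h
  loopless := by
    constructor
    intro u h
    cases u with
    | inl x =>
      rcases h with ⟨a, b, hx, hy, hab⟩ | h | h
      · rw [hx] at hy
        injection hy with hab'
        rw [hab'] at hab
        exact G.loopless.irrefl _ hab
      · exact not_mem_ch x h
      · exact not_mem_ch x h
    | inr f => exact hirr _ h

variable {G : SimpleGraph β} {σ : κ → Bool} {E : κ → κ → Prop}
  {hsymm : ∀ f f', E f f' → E f' f} {hirr : ∀ f, ¬ E f f}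

@[simp] theorem delta_adj_base_base (a b : β) :
    (Delta G σ E hsymm hirr).Adj (Sum.inl (base a)) (Sum.inl (base b)) ↔ G.Adj a b := by
  constructor
  · rintro (⟨a', b', ha, hb, hab⟩ | h | h)
    · injection ha with h1; injection hb with h2; rwa [h1, h2]
    · simp [ch] at h
    · simp [ch] at h
  · intro h; exact Or.inl ⟨a, b, rfl, rfl, h⟩

@[simp] theorem delta_adj_inl_inr (x : Tw β κ) (f : κ) :
    (Delta G σ E hsymm hirr).Adj (Sum.inl x) (Sum.inr f) ↔ pat σ x f = true := Iff.rfl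

@[simp] theorem delta_adj_inr_inr (f f' : κ) :
    (Delta G σ E hsymm hirr).Adj (Sum.inr f) (Sum.inr f') ↔ E f f' := Iff.rfl

theorem delta_adj_node_inl (n : ℕ) (L : List (Tw β κ)) (τ : κ → Bool) (s : Tw β κ) :
    (Delta G σ E hsymm hirr).Adj (Sum.inl (node n L τ)) (Sum.inl s) ↔
      (s ∈ L ∨ node n L τ ∈ ch s) := by
  constructor
  · rintro (⟨a, b, ha, _, _⟩ | h | h)
    · exact absurd ha (by simp)
    · exact Or.inr h
    · exact Or.inl h
  · rintro (h | h)
    · exact Or.inr (Or.inr h)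
    · exact Or.inr (Or.inl h)

/-- Lifting an automorphism of `G` to the tower graph. -/
def deltaIso (g : G ≃g G) : (Delta G σ E hsymm hirr) ≃g (Delta G σ E hsymm hirr) where
  toEquiv := Equiv.sumCongr (mapEquiv g.toEquiv) (Equiv.refl κ)
  map_rel_iff' := by
    intro u v
    have hinj : Function.Injective (map (⇑g) : Tw β κ → Tw β κ) :=
      (mapEquiv g.toEquiv).injective
    cases u with
    | inl x => cases v with
      | inl y =>
        show DAdj G σ E (Sum.inl (map (⇑g) x)) (Sum.inl (map (⇑g) y)) ↔ _
        show (∃ a b, map (⇑g) x = base a ∧ map (⇑g) y = base b ∧ G.Adj a b) ∨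
          map (⇑g) x ∈ ch (map (⇑g) y) ∨ map (⇑g) y ∈ ch (map (⇑g) x) ↔ _
        rw [ch_map, ch_map, List.mem_map_of_injective hinj, List.mem_map_of_injective hinj]
        constructor
        · rintro (⟨a, b, hx, hy, hab⟩ | h) <;> [skip; exact Or.inr h]
          cases x with
          | base xa => cases y with
            | base yb =>
              rw [map_base] at hx hy
              injection hx with h1; injection hy with h2
              refine Or.inl ⟨xa, yb, rfl, rfl, ?_⟩
              have : G.Adj (g xa) (g yb) := by rwa [h1, h2]
              exact g.map_adj_iff.mp this
            | node m K ρ => rw [map_node] at hy; exact absurd hy (by simp)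
          | node m K ρ => rw [map_node] at hx; exact absurd hx (by simp)
        · rintro (⟨a, b, hx, hy, hab⟩ | h) <;> [skip; exact Or.inr h]
          subst hx; subst hy
          exact Or.inl ⟨g a, g b, map_base _ _, map_base _ _, g.map_adj_iff.mpr hab⟩
      | inr f =>
        show DAdj G σ E (Sum.inl (map (⇑g) x)) (Sum.inr f) ↔ _
        show pat σ (map (⇑g) x) f = true ↔ pat σ x f = true
        rw [pat_map]
    | inr f => cases v with
      | inl y =>
        show DAdj G σ E (Sum.inr f) (Sum.inl (map (⇑g) y)) ↔ _
        show pat σ (map (⇑g) y) f = true ↔ pat σ y f = true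
        rw [pat_map]
      | inr f' => exact Iff.rfl

@[simp] theorem deltaIso_apply_base (g : G ≃g G) (b : β) :
    (deltaIso (σ := σ) (E := E) (hsymm := hsymm) (hirr := hirr) g) (Sum.inl (base b)) =
      Sum.inl (base (g b)) := by
  show Sum.map (map (⇑g)) id (Sum.inl (base b)) = _
  simp [map_base]

end Tw

section Main

variable {V W : Type*}

abbrev kap (As Bs : Finset V) : Type _ := {v : V // v ∈ As ∪ Bs}

noncomputable abbrev sig (As Bs : Finset V) : kap As Bs → Bool := fun k => decide (k.1 ∈ As)

abbrev EE (Γ : SimpleGraph V) (As Bs : Finset V) : kap As Bs → kap As Bs → Prop :=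
  fun k k' => Γ.Adj k.1 k'.1

theorem EE_symm (Γ : SimpleGraph V) (As Bs : Finset V) :
    ∀ f f', EE Γ As Bs f f' → EE Γ As Bs f' f := fun _ _ h => h.symm

theorem EE_irr (Γ : SimpleGraph V) (As Bs : Finset V) : ∀ f, ¬ EE Γ As Bs f f :=
  fun k h => Γ.loopless.irrefl _ h

noncomputable abbrev DD (Γ : SimpleGraph V) (G : SimpleGraph W) (As Bs : Finset V) :
    SimpleGraph (Tw W (kap As Bs) ⊕ kap As Bs) :=
  Tw.Delta G (sig As Bs) (EE Γ As Bs) (EE_symm Γ As Bs) (EE_irr Γ As Bs)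

abbrev UU (As Bs : Finset V) : Set V := {v | v ∉ As ∧ v ∉ Bs}

abbrev WW (Γ : SimpleGraph V) (c1 : V → Bool) (bst : Bool) (As Bs : Finset V) : Set V :=
  {x | x ∈ UU As Bs ∧ c1 x = bst ∧ (∀ a ∈ As, Γ.Adj x a) ∧ ∀ y ∈ Bs, ¬ Γ.Adj x y}

variable {Γ : SimpleGraph V} {c1 : V → Bool} {bst : Bool} {As Bs : Finset V}

/-- The genericity property of the color class, as provided by `colorclass_generic`. -/
def GenH (Γ : SimpleGraph V) (c1 : V → Bool) (bst : Bool) (As Bs : Finset V) : Prop :=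
  ∀ (R A B : Finset V), Disjoint A B → Disjoint (A ∪ B) (As ∪ Bs) →
    ∃ x, x ∉ A ∧ x ∉ B ∧ x ∉ As ∧ x ∉ Bs ∧ x ∉ R ∧ c1 x = bst ∧
      (∀ a ∈ A ∪ As, Γ.Adj x a) ∧ ∀ y ∈ B ∪ Bs, ¬ Γ.Adj x y

theorem disj_env {A B : Finset V} (hA : ∀ a ∈ A, a ∈ UU As Bs) (hB : ∀ b ∈ B, b ∈ UU As Bs) :
    Disjoint (A ∪ B) (As ∪ Bs) := by
  rw [Finset.disjoint_left]
  intro a ha hmem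
  rcases Finset.mem_union.mp ha with h | h
  · rcases Finset.mem_union.mp hmem with h' | h'
    · exact (hA a h).1 h'
    · exact (hA a h).2 h'
  · rcases Finset.mem_union.mp hmem with h' | h'
    · exact (hB a h).1 h'
    · exact (hB a h).2 h'

/-- Witnesses for placing base vertices: in the monochromatic generic set `WW`. -/
theorem witness_base (hgen : GenH Γ c1 bst As Bs) (A B R : Finset V)
    (hA : ∀ a ∈ A, a ∈ UU As Bs) (hB : ∀ b ∈ B, b ∈ UU As Bs) (hAB : Disjoint A B) :
    ∃ x, x ∈ WW Γ c1 bst As Bs ∧ x ∉ A ∧ x ∉ B ∧ x ∉ R ∧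
      (∀ a ∈ A, Γ.Adj x a) ∧ ∀ y ∈ B, ¬ Γ.Adj x y := by
  obtain ⟨x, h1, h2, h3, h4, h5, h6, h7, h8⟩ := hgen R A B hAB (disj_env hA hB)
  exact ⟨x, ⟨⟨h3, h4⟩, h6, fun a ha => h7 a (Finset.mem_union_right _ ha),
      fun y hy => h8 y (Finset.mem_union_right _ hy)⟩, h1, h2, h5,
    fun a ha => h7 a (Finset.mem_union_left _ ha), fun y hy => h8 y (Finset.mem_union_left _ hy)⟩

/-- Witnesses for placing node vertices: arbitrary pattern `τ` towards the environment. -/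
theorem witness_node (hΓ : HasExtProp Γ) (A B R : Finset V) (τ : kap As Bs → Bool)
    (hA : ∀ a ∈ A, a ∈ UU As Bs) (hB : ∀ b ∈ B, b ∈ UU As Bs) (hAB : Disjoint A B) :
    ∃ x, x ∈ UU As Bs ∧ x ∉ A ∧ x ∉ B ∧ x ∉ R ∧
      (∀ a ∈ A, Γ.Adj x a) ∧ (∀ y ∈ B, ¬ Γ.Adj x y) ∧
      ∀ k : kap As Bs, Γ.Adj x k.1 ↔ τ k = true := by
  classical
  set Aτ : Finset V := (As ∪ Bs).filter (fun v => ∃ h : v ∈ As ∪ Bs, τ ⟨v, h⟩ = true) with hAτ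
  set Bτ : Finset V := (As ∪ Bs).filter (fun v => ¬ ∃ h : v ∈ As ∪ Bs, τ ⟨v, h⟩ = true) with hBτ
  have hAenv : ∀ a ∈ A, a ∉ As ∪ Bs := fun a ha hm =>
    (Finset.mem_union.mp hm).elim (fun h => (hA a ha).1 h) (fun h => (hA a ha).2 h)
  have hBenv : ∀ b ∈ B, b ∉ As ∪ Bs := fun b hb hm =>
    (Finset.mem_union.mp hm).elim (fun h => (hB b hb).1 h) (fun h => (hB b hb).2 h)
  have hdisj : Disjoint (A ∪ Aτ) (B ∪ Bτ) := by
    rw [Finset.disjoint_union_left, Finset.disjoint_union_right, Finset.disjoint_union_right]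
    refine ⟨⟨hAB, ?_⟩, ?_, ?_⟩
    · rw [Finset.disjoint_left]
      intro a ha hmem
      exact hAenv a ha ((Finset.filter_subset _ _) hmem)
    · rw [Finset.disjoint_right]
      intro a ha hmem
      exact hBenv a ha ((Finset.filter_subset _ _) hmem)
    · rw [hAτ, hBτ]
      exact Finset.disjoint_filter_filter_not _ _ _
  obtain ⟨x, hxA, hxB, hxR, hadj, hnadj⟩ := extprop_fresh hΓ R (A ∪ Aτ) (B ∪ Bτ) hdisj
  simp only [Finset.mem_union, not_or] at hxA hxB
  have hxU : x ∈ UU As Bs := by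
    constructor
    · intro hx
      by_cases hτ : ∃ h : x ∈ As ∪ Bs, τ ⟨x, h⟩ = true
      · exact hxA.2 (Finset.mem_filter.mpr ⟨Finset.mem_union_left _ hx, hτ⟩)
      · exact hxB.2 (Finset.mem_filter.mpr ⟨Finset.mem_union_left _ hx, hτ⟩)
    · intro hx
      by_cases hτ : ∃ h : x ∈ As ∪ Bs, τ ⟨x, h⟩ = true
      · exact hxA.2 (Finset.mem_filter.mpr ⟨Finset.mem_union_right _ hx, hτ⟩)
      · exact hxB.2 (Finset.mem_filter.mpr ⟨Finset.mem_union_right _ hx, hτ⟩)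
  refine ⟨x, hxU, hxA.1, hxB.1, hxR, fun a ha => hadj a (Finset.mem_union_left _ ha),
    fun y hy => hnadj y (Finset.mem_union_left _ hy), ?_⟩
  intro k
  constructor
  · intro hadjk
    by_contra hτk
    have hk : k.1 ∈ Bτ := Finset.mem_filter.mpr ⟨k.2, by
      rintro ⟨h, hh⟩
      have heq : (⟨k.1, h⟩ : kap As Bs) = k := Subtype.ext rfl
      rw [heq] at hh
      exact hτk hh⟩
    exact hnadj k.1 (Finset.mem_union_right _ hk) hadjk
  · intro hτk
    have hk : k.1 ∈ Aτ := Finset.mem_filter.mpr ⟨k.2, ⟨k.2, by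
      have heq : (⟨k.1, k.2⟩ : kap As Bs) = k := Subtype.ext rfl
      rw [heq]
      exact hτk⟩⟩
    exact hadj k.1 (Finset.mem_union_right _ hk)

end Main

section BF

variable {V W : Type*} (Γ : SimpleGraph V) (G : SimpleGraph W)
  (c1 : V → Bool) (bst : Bool) (As Bs : Finset V)

/-- Finite partial isomorphisms from the tower graph to `Γ`. -/
structure PI where
  dom : Finset (Tw W (kap As Bs))
  f : Tw W (kap As Bs) → V
  inj : ∀ s ∈ dom, ∀ t ∈ dom, f s = f t → s = t
  memU : ∀ s ∈ dom, f s ∈ UU As Bs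
  baseW : ∀ b : W, Tw.base b ∈ dom → f (Tw.base b) ∈ WW Γ c1 bst As Bs
  adj : ∀ s ∈ dom, ∀ t ∈ dom,
    ((DD Γ G As Bs).Adj (Sum.inl s) (Sum.inl t) ↔ Γ.Adj (f s) (f t))
  spec : ∀ s ∈ dom, ∀ k : kap As Bs,
    ((DD Γ G As Bs).Adj (Sum.inl s) (Sum.inr k) ↔ Γ.Adj (f s) k.1)

variable {Γ G c1 bst As Bs}

/-- Extending a partial isomorphism by one point. -/
theorem PI.extend (P : PI Γ G c1 bst As Bs) (u : Tw W (kap As Bs)) (hu : u ∉ P.dom) (x : V)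
    (hxU : x ∈ UU As Bs)
    (hxW : ∀ b : W, u = Tw.base b → x ∈ WW Γ c1 bst As Bs)
    (hfresh : x ∉ P.dom.image P.f)
    (hadj : ∀ s ∈ P.dom, ((DD Γ G As Bs).Adj (Sum.inl u) (Sum.inl s) ↔ Γ.Adj x (P.f s)))
    (hspec : ∀ k : kap As Bs, ((DD Γ G As Bs).Adj (Sum.inl u) (Sum.inr k) ↔ Γ.Adj x k.1)) :
    ∃ P' : PI Γ G c1 bst As Bs, P.dom ⊆ P'.dom ∧ (∀ s ∈ P.dom, P'.f s = P.f s) ∧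
      u ∈ P'.dom ∧ P'.f u = x := by
  classical
  have hfold : ∀ s ∈ P.dom, Function.update P.f u x s = P.f s := by
    intro s hs
    refine Function.update_of_ne ?_ _ _
    rintro rfl
    exact hu hs
  have hx_ne : ∀ s ∈ P.dom, P.f s ≠ x := by
    intro s hs h
    exact hfresh (Finset.mem_image.mpr ⟨s, hs, h⟩)
  refine ⟨⟨insert u P.dom, Function.update P.f u x, ?_, ?_, ?_, ?_, ?_⟩,
    Finset.subset_insert _ _, hfold, Finset.mem_insert_self _ _, ?_⟩
  · -- inj
    intro s hs t ht hst
    rcases Finset.mem_insert.mp hs with hs2 | hs2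
    · rcases Finset.mem_insert.mp ht with ht2 | ht2
      · rw [hs2, ht2]
      · subst hs2
        rw [Function.update_self, hfold t ht2] at hst
        exact absurd hst.symm (hx_ne t ht2)
    · rcases Finset.mem_insert.mp ht with ht2 | ht2
      · subst ht2
        rw [Function.update_self, hfold s hs2] at hst
        exact absurd hst (hx_ne s hs2)
      · rw [hfold s hs2, hfold t ht2] at hst
        exact P.inj s hs2 t ht2 hst
  · -- memU
    intro s hs
    rcases Finset.mem_insert.mp hs with hs2 | hs2
    · subst hs2; rwa [Function.update_self]
    · rw [hfold s hs2]; exact P.memU s hs2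
  · -- baseW
    intro b hb
    rcases Finset.mem_insert.mp hb with hb2 | hb2
    · rw [← hb2, Function.update_self]
      exact hxW b hb2.symm
    · rw [hfold _ hb2]; exact P.baseW b hb2
  · -- adj
    intro s hs t ht
    rcases Finset.mem_insert.mp hs with hs2 | hs2
    · subst hs2
      rcases Finset.mem_insert.mp ht with ht2 | ht2
      · subst ht2
        simp only [Function.update_self]
        exact iff_of_false ((DD Γ G As Bs).irrefl) (Γ.irrefl)
      · rw [Function.update_self, hfold t ht2]
        exact hadj t ht2
    · rcases Finset.mem_insert.mp ht with ht2 | ht2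
      · subst ht2
        rw [Function.update_self, hfold s hs2]
        rw [SimpleGraph.adj_comm, Γ.adj_comm]
        exact hadj s hs2
      · rw [hfold s hs2, hfold t ht2]
        exact P.adj s hs2 t ht2
  · -- spec
    intro s hs k
    rcases Finset.mem_insert.mp hs with hs2 | hs2
    · subst hs2; rw [Function.update_self]; exact hspec k
    · rw [hfold s hs2]; exact P.spec s hs2 k
  · show Function.update P.f u x u = x
    exact Function.update_self _ _ _

theorem PI.forth (hΓ : HasExtProp Γ) (hgen : GenH Γ c1 bst As Bs) (hd : Disjoint As Bs)
    (P : PI Γ G c1 bst As Bs) (u : Tw W (kap As Bs)) :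
    ∃ P' : PI Γ G c1 bst As Bs, P.dom ⊆ P'.dom ∧ (∀ s ∈ P.dom, P'.f s = P.f s) ∧
      u ∈ P'.dom := by
  classical
  by_cases hu : u ∈ P.dom
  · exact ⟨P, subset_rfl, fun _ _ => rfl, hu⟩
  set A1 := P.dom.filter (fun s => (DD Γ G As Bs).Adj (Sum.inl u) (Sum.inl s)) with hA1
  set B1 := P.dom.filter (fun s => ¬ (DD Γ G As Bs).Adj (Sum.inl u) (Sum.inl s)) with hB1
  have hAU : ∀ a ∈ A1.image P.f, a ∈ UU As Bs := by
    intro a ha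
    obtain ⟨s, hs, rfl⟩ := Finset.mem_image.mp ha
    exact P.memU s (Finset.filter_subset _ _ hs)
  have hBU : ∀ a ∈ B1.image P.f, a ∈ UU As Bs := by
    intro a ha
    obtain ⟨s, hs, rfl⟩ := Finset.mem_image.mp ha
    exact P.memU s (Finset.filter_subset _ _ hs)
  have hABd : Disjoint (A1.image P.f) (B1.image P.f) := by
    rw [Finset.disjoint_left]
    intro a ha hb
    obtain ⟨s, hs, hfs⟩ := Finset.mem_image.mp ha
    obtain ⟨t, ht, hft⟩ := Finset.mem_image.mp hb
    have := P.inj s (Finset.filter_subset _ _ hs) t (Finset.filter_subset _ _ ht)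
      (hfs.trans hft.symm)
    subst this
    exact (Finset.mem_filter.mp ht).2 (Finset.mem_filter.mp hs).2
  have key : ∃ x, x ∈ UU As Bs ∧ (u = u → ∀ b : W, u = Tw.base b → x ∈ WW Γ c1 bst As Bs) ∧
      x ∉ P.dom.image P.f ∧
      (∀ a ∈ A1.image P.f, Γ.Adj x a) ∧ (∀ y ∈ B1.image P.f, ¬ Γ.Adj x y) ∧
      (∀ k : kap As Bs, ((DD Γ G As Bs).Adj (Sum.inl u) (Sum.inr k) ↔ Γ.Adj x k.1)) := by
    cases u with
    | base b =>
      obtain ⟨x, hxW, hxA, hxB, hxR, hadjA, hnadjB⟩ :=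
        witness_base hgen (A1.image P.f) (B1.image P.f) (P.dom.image P.f) hAU hBU hABd
      refine ⟨x, hxW.1, fun _ _ _ => hxW, hxR, hadjA, hnadjB, ?_⟩
      intro k
      rw [Tw.delta_adj_inl_inr]
      have hpat : Tw.pat (sig As Bs) (Tw.base b) k = decide (k.1 ∈ As) := rfl
      rw [hpat]
      rcases Finset.mem_union.mp k.2 with hk | hk
      · exact iff_of_true (by simpa using hk) (hxW.2.2.1 k.1 hk)
      · have hkAs : k.1 ∉ As := fun hmem => (Finset.disjoint_left.mp hd hmem) hk
        exact iff_of_false (by simpa using hkAs) (hxW.2.2.2 k.1 hk)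
    | node m L τ =>
      obtain ⟨x, hxU, hxA, hxB, hxR, hadjA, hnadjB, hpatx⟩ :=
        witness_node (As := As) (Bs := Bs) hΓ (A1.image P.f) (B1.image P.f)
          (P.dom.image P.f) τ hAU hBU hABd
      refine ⟨x, hxU, fun _ _ hb => absurd hb (by simp), hxR, hadjA, hnadjB, ?_⟩
      intro k
      rw [Tw.delta_adj_inl_inr]
      have hpat : Tw.pat (sig As Bs) (Tw.node m L τ) k = τ k := rfl
      rw [hpat]
      exact (hpatx k).symm
  obtain ⟨x, hxU, hxW, hxR, hadjA, hnadjB, hspec⟩ := key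
  have hadj : ∀ s ∈ P.dom, ((DD Γ G As Bs).Adj (Sum.inl u) (Sum.inl s) ↔ Γ.Adj x (P.f s)) := by
    intro s hs
    by_cases hsadj : (DD Γ G As Bs).Adj (Sum.inl u) (Sum.inl s)
    · exact iff_of_true hsadj
        (hadjA (P.f s) (Finset.mem_image.mpr ⟨s, Finset.mem_filter.mpr ⟨hs, hsadj⟩, rfl⟩))
    · exact iff_of_false hsadj
        (hnadjB (P.f s) (Finset.mem_image.mpr ⟨s, Finset.mem_filter.mpr ⟨hs, hsadj⟩, rfl⟩))
  obtain ⟨P', h1, h2, h3, _⟩ := P.extend u hu x hxU (hxW rfl) hxR hadj hspec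
  exact ⟨P', h1, h2, h3⟩

theorem PI.back (P : PI Γ G c1 bst As Bs) (w : V) (hw : w ∈ UU As Bs) :
    ∃ P' : PI Γ G c1 bst As Bs, P.dom ⊆ P'.dom ∧ (∀ s ∈ P.dom, P'.f s = P.f s) ∧
      ∃ s ∈ P'.dom, P'.f s = w := by
  classical
  by_cases hex : ∃ s ∈ P.dom, P.f s = w
  · exact ⟨P, subset_rfl, fun _ _ => rfl, hex⟩
  set L := (P.dom.filter (fun s => Γ.Adj (P.f s) w)).toList with hL
  set τ : kap As Bs → Bool := fun k => decide (Γ.Adj w k.1) with hτ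
  obtain ⟨n, hn1, hn2⟩ := Tw.fresh_node P.dom L τ
  have hadj : ∀ s ∈ P.dom,
      ((DD Γ G As Bs).Adj (Sum.inl (Tw.node n L τ)) (Sum.inl s) ↔ Γ.Adj w (P.f s)) := by
    intro s hs
    rw [Tw.delta_adj_node_inl]
    constructor
    · rintro (hsl | hsl)
      · have := Finset.mem_filter.mp (Finset.mem_toList.mp hsl)
        exact this.2.symm
      · exact absurd hsl (hn2 s hs)
    · intro hadjw
      exact Or.inl (Finset.mem_toList.mpr (Finset.mem_filter.mpr ⟨hs, hadjw.symm⟩))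
  have hspec : ∀ k : kap As Bs,
      ((DD Γ G As Bs).Adj (Sum.inl (Tw.node n L τ)) (Sum.inr k) ↔ Γ.Adj w k.1) := by
    intro k
    rw [Tw.delta_adj_inl_inr]
    have hpat : Tw.pat (sig As Bs) (Tw.node n L τ) k = τ k := rfl
    rw [hpat, hτ]
    simp
  have hfresh : w ∉ P.dom.image P.f := by
    intro hmem
    obtain ⟨s, hs, hfs⟩ := Finset.mem_image.mp hmem
    exact hex ⟨s, hs, hfs⟩
  obtain ⟨P', h1, h2, h3, h4⟩ := P.extend (Tw.node n L τ) hn1 w hw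
    (fun b hb => absurd hb (by simp)) hfresh hadj hspec
  exact ⟨P', h1, h2, Tw.node n L τ, h3, h4⟩

theorem exists_delta_iso [Nonempty V] [Countable V] [Nonempty W] [Countable W]
    (hΓ : HasExtProp Γ) (hgen : GenH Γ c1 bst As Bs) (hd : Disjoint As Bs) :
    ∃ Φ : (DD Γ G As Bs) ≃g Γ, ∀ b : W, Φ (Sum.inl (Tw.base b)) ∈ WW Γ c1 bst As Bs := by
  classical
  obtain ⟨sβ, hsβ⟩ := exists_surjective_nat W
  obtain ⟨sτ, hsτ⟩ := exists_surjective_nat (kap As Bs → Bool)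
  obtain ⟨sV, hsV⟩ := exists_surjective_nat V
  set enumD : ℕ → Tw W (kap As Bs) := Tw.S sβ sτ (Classical.arbitrary W) with henumD
  have hD : Function.Surjective enumD := Tw.S_surj sβ sτ (Classical.arbitrary W) hsβ hsτ
  have hstep : ∀ (P : PI Γ G c1 bst As Bs) (m : ℕ), ∃ P' : PI Γ G c1 bst As Bs,
      P.dom ⊆ P'.dom ∧ (∀ s ∈ P.dom, P'.f s = P.f s) ∧ enumD m ∈ P'.dom ∧
      (sV m ∈ UU As Bs → ∃ s ∈ P'.dom, P'.f s = sV m) := by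
    intro P m
    obtain ⟨Q, hQ1, hQ2, hQ3⟩ := P.forth hΓ hgen hd (enumD m)
    by_cases hU : sV m ∈ UU As Bs
    · obtain ⟨P', h1, h2, h3⟩ := Q.back (sV m) hU
      exact ⟨P', hQ1.trans h1, fun s hs => (h2 s (hQ1 hs)).trans (hQ2 s hs), h1 hQ3, fun _ => h3⟩
    · exact ⟨Q, hQ1, hQ2, hQ3, fun h => absurd h hU⟩
  have P0 : PI Γ G c1 bst As Bs :=
    ⟨∅, fun _ => Classical.arbitrary V, by simp, by simp, by simp, by simp, by simp⟩
  set chain : ℕ → PI Γ G c1 bst As Bs :=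
    fun n => Nat.rec P0 (fun m Q => (hstep Q m).choose) n with hchain
  have chain_spec : ∀ n, (chain n).dom ⊆ (chain (n+1)).dom ∧
      (∀ s ∈ (chain n).dom, (chain (n+1)).f s = (chain n).f s) ∧
      enumD n ∈ (chain (n+1)).dom ∧
      (sV n ∈ UU As Bs → ∃ s ∈ (chain (n+1)).dom, (chain (n+1)).f s = sV n) := by
    intro n
    exact (hstep (chain n) n).choose_spec
  have hmono : ∀ m n, m ≤ n → (chain m).dom ⊆ (chain n).dom ∧
      ∀ s ∈ (chain m).dom, (chain n).f s = (chain m).f s := by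
    intro m n h
    induction h with
    | refl => exact ⟨subset_rfl, fun _ _ => rfl⟩
    | @step n h ih =>
      refine ⟨ih.1.trans (chain_spec n).1, fun s hs => ?_⟩
      rw [(chain_spec n).2.1 s (ih.1 hs)]
      exact ih.2 s hs
  have hdomall : ∀ t : Tw W (kap As Bs), ∃ n, t ∈ (chain n).dom := by
    intro t
    obtain ⟨m, hm⟩ := hD t
    exact ⟨m + 1, hm ▸ (chain_spec m).2.2.1⟩
  set F : Tw W (kap As Bs) → V := fun t => (chain (hdomall t).choose).f t with hF
  have F_eq : ∀ n t, t ∈ (chain n).dom → F t = (chain n).f t := by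
    intro n t ht
    have h1 := (hdomall t).choose_spec
    rcases le_total (hdomall t).choose n with h | h
    · rw [hF]
      simp only []
      rw [← (hmono _ n h).2 t h1]
    · rw [hF]
      simp only []
      rw [(hmono n _ h).2 t ht]
  -- pairwise facts
  have hmemU : ∀ t, F t ∈ UU As Bs := by
    intro t
    have h1 := (hdomall t).choose_spec
    rw [F_eq _ t h1]
    exact (chain _).memU t h1
  have hbaseW : ∀ b : W, F (Tw.base b) ∈ WW Γ c1 bst As Bs := by
    intro b
    have h1 := (hdomall (Tw.base b)).choose_spec
    rw [F_eq _ _ h1]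
    exact (chain _).baseW b h1
  have hFinj : Function.Injective F := by
    intro s t hst
    have hns := (hdomall s).choose_spec
    have hnt := (hdomall t).choose_spec
    set m := max (hdomall s).choose (hdomall t).choose
    have hs' : s ∈ (chain m).dom := (hmono _ m (le_max_left _ _)).1 hns
    have ht' : t ∈ (chain m).dom := (hmono _ m (le_max_right _ _)).1 hnt
    refine (chain m).inj s hs' t ht' ?_
    rw [← F_eq m s hs', ← F_eq m t ht', hst]
  have hFadj : ∀ s t, ((DD Γ G As Bs).Adj (Sum.inl s) (Sum.inl t) ↔ Γ.Adj (F s) (F t)) := by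
    intro s t
    have hns := (hdomall s).choose_spec
    have hnt := (hdomall t).choose_spec
    set m := max (hdomall s).choose (hdomall t).choose
    have hs' : s ∈ (chain m).dom := (hmono _ m (le_max_left _ _)).1 hns
    have ht' : t ∈ (chain m).dom := (hmono _ m (le_max_right _ _)).1 hnt
    rw [F_eq m s hs', F_eq m t ht']
    exact (chain m).adj s hs' t ht'
  have hFspec : ∀ s (k : kap As Bs),
      ((DD Γ G As Bs).Adj (Sum.inl s) (Sum.inr k) ↔ Γ.Adj (F s) k.1) := by
    intro s k
    have hns := (hdomall s).choose_spec
    rw [F_eq _ s hns]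
    exact (chain _).spec s hns k
  have hFsurj : ∀ w ∈ UU As Bs, ∃ t, F t = w := by
    intro w hw
    obtain ⟨m, hm⟩ := hsV w
    subst hm
    obtain ⟨t, ht, hft⟩ := (chain_spec m).2.2.2 hw
    exact ⟨t, (F_eq (m + 1) t ht).trans hft⟩
  -- the full bijection
  set Φf : (Tw W (kap As Bs) ⊕ kap As Bs) → V := Sum.elim F Subtype.val with hΦf
  have hbij : Function.Bijective Φf := by
    constructor
    · intro u v huv
      cases u with
      | inl s => cases v with
        | inl t => exact congrArg Sum.inl (hFinj huv)
        | inr k =>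
          exfalso
          have h1 := hmemU s
          rw [show Φf (Sum.inl s) = F s from rfl, show Φf (Sum.inr k) = k.1 from rfl] at huv
          rw [huv] at h1
          rcases Finset.mem_union.mp k.2 with hk | hk
          · exact h1.1 hk
          · exact h1.2 hk
      | inr k => cases v with
        | inl t =>
          exfalso
          have h1 := hmemU t
          rw [show Φf (Sum.inr k) = k.1 from rfl, show Φf (Sum.inl t) = F t from rfl] at huv
          rw [← huv] at h1
          rcases Finset.mem_union.mp k.2 with hk | hk
          · exact h1.1 hk
          · exact h1.2 hk
        | inr k' => exact congrArg Sum.inr (Subtype.ext huv)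
    · intro w
      by_cases hw : w ∈ As ∪ Bs
      · exact ⟨Sum.inr ⟨w, hw⟩, rfl⟩
      · have hw' : w ∈ UU As Bs := by
          simp only [Finset.mem_union, not_or] at hw
          exact ⟨hw.1, hw.2⟩
        obtain ⟨t, ht⟩ := hFsurj w hw'
        exact ⟨Sum.inl t, ht⟩
  refine ⟨⟨Equiv.ofBijective Φf hbij, ?_⟩, ?_⟩
  · intro u v
    show Γ.Adj (Φf u) (Φf v) ↔ (DD Γ G As Bs).Adj u v
    cases u with
    | inl s => cases v with
      | inl t => exact (hFadj s t).symm
      | inr k => exact (hFspec s k).symm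
    | inr k => cases v with
      | inl t =>
        rw [Γ.adj_comm, (DD Γ G As Bs).adj_comm]
        exact (hFspec t k).symm
      | inr k' => exact Iff.rfl
  · intro b
    exact hbaseW b

end BF

theorem symIndivGraph_of_symEmb_randomGraph {V W : Type*} [Countable V] [Countable W]
    (Γ : SimpleGraph V) (hΓ : HasExtProp Γ) (G : SimpleGraph W)
    (h : ∃ e : Γ ↪g G, IsSymmetricGraphEmb e) :
    SymIndivGraph G := by
  classical
  obtain ⟨e, he⟩ := h
  intro c
  have hne : Nonempty V := by
    obtain ⟨v, -, -, -, -⟩ := hΓ ∅ ∅ (by simp)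
    exact ⟨v⟩
  have hneW : Nonempty W := ⟨e (Classical.arbitrary V)⟩
  set c1 : V → Bool := fun v => c (e v) with hc1
  obtain ⟨bst, As, Bs, hd, hgen⟩ := colorclass_generic hΓ c1
  have hgen' : GenH Γ c1 bst As Bs := hgen
  obtain ⟨Φ, hΦ⟩ := exists_delta_iso (Γ := Γ) (G := G) (c1 := c1) (bst := bst) hΓ hgen' hd
  have hembB_inj : Function.Injective
      (fun b : W => (Sum.inl (Tw.base b) : Tw W (kap As Bs) ⊕ kap As Bs)) := by
    intro a b hab
    simp only [Sum.inl.injEq] at hab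
    injection hab
  set embB : G ↪g (DD Γ G As Bs) :=
    ⟨⟨fun b => Sum.inl (Tw.base b), hembB_inj⟩, by
      intro a b
      exact Tw.delta_adj_base_base a b⟩ with hembB
  set E : G ↪g G := e.comp (Φ.toEmbedding.comp embB) with hE
  have hEapp : ∀ x : W, E x = e (Φ (Sum.inl (Tw.base x))) := fun x => rfl
  refine ⟨E, ?_, ?_⟩
  · intro g
    set δg : (DD Γ G As Bs) ≃g (DD Γ G As Bs) :=
      Tw.deltaIso (σ := sig As Bs) (E := EE Γ As Bs)
        (hsymm := EE_symm Γ As Bs) (hirr := EE_irr Γ As Bs) g with hδg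
    set γ : Γ ≃g Γ := (Φ.symm.trans δg).trans Φ with hγ
    obtain ⟨g', hg'⟩ := he γ
    refine ⟨g', ?_⟩
    intro x
    rw [hEapp x, hEapp (g x)]
    rw [hg' (Φ (Sum.inl (Tw.base x)))]
    congr 1
    show Φ (δg (Φ.symm (Φ (Sum.inl (Tw.base x))))) = Φ (Sum.inl (Tw.base (g x)))
    congr 1
    rw [RelIso.symm_apply_apply]
    exact Tw.deltaIso_apply_base g x
  · intro x y
    rw [hEapp x, hEapp y]
    have hx := (hΦ x).2.1
    have hy := (hΦ y).2.1
    show c1 (Φ (Sum.inl (Tw.base x))) = c1 (Φ (Sum.inl (Tw.base y)))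
    rw [hx, hy]
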